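/- Let x f : Fin N → EuclideanSpace ℝ (Fin d) and let λ : Fin N → Fin N → ℝ satisfy λ i j = λ j i for all i, j and the equilibrium conditions f i + ∑ j, (λ i j) • (x j − x i) = 0 for all i. Then ∑ i, ⟪f i, x i⟫ = (1/2) * ∑ i, ∑ j, λ i j * ‖x i − x j‖². (Discrete form of the identity ⟨F, x⟩ = ∫ Tr(S): the work of the loading against the identity displacement equals the total cost of the truss.) -/
import Mathlib


open scoped InnerProductSpace BigOperators

/-- Discrete form of the identity `⟨F, x⟩ = ∫ Tr(S)`: the work of the loading
against the identity displacement equals the total cost of the truss. -/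
theorem work_eq_total_cost (d N : ℕ)
    (x f : Fin N → EuclideanSpace ℝ (Fin d))
    (lam : Fin N → Fin N → ℝ)
    (hsym : ∀ i j, lam i j = lam j i)
    (heq : ∀ i, f i + ∑ j, lam i j • (x j - x i) = 0) :
    ∑ i, ⟪f i, x i⟫_ℝ = (1 / 2) * ∑ i, ∑ j, lam i j * ‖x i - x j‖ ^ 2 := by
  have hf : ∀ i, f i = ∑ j, lam i j • (x i - x j) := by
    intro i
    have := heq i
    have h : f i = -∑ j, lam i j • (x j - x i) := by rw [eq_neg_iff_add_eq_zero]; exact this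
    rw [h, ← Finset.sum_neg_distrib]
    congr 1; ext j; rw [← smul_neg, neg_sub]
  have key : ∑ i, ⟪f i, x i⟫_ℝ = ∑ i, ∑ j, lam i j * ⟪x i - x j, x i⟫_ℝ := by
    refine Finset.sum_congr rfl fun i _ => ?_
    rw [hf i, sum_inner]
    exact Finset.sum_congr rfl fun j _ => real_inner_smul_left _ _ _
  rw [key]
  have swap : ∑ i, ∑ j, lam i j * ⟪x i - x j, x i⟫_ℝ
      = ∑ i, ∑ j, lam i j * ⟪x j - x i, x j⟫_ℝ := by
    rw [Finset.sum_comm]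
    exact Finset.sum_congr rfl fun j _ => Finset.sum_congr rfl fun i _ => by rw [hsym]
  have h2 : (2 : ℝ) * ∑ i, ∑ j, lam i j * ⟪x i - x j, x i⟫_ℝ
      = ∑ i, ∑ j, lam i j * ‖x i - x j‖ ^ 2 := by
    rw [two_mul]
    nth_rewrite 2 [swap]
    rw [← Finset.sum_add_distrib]
    refine Finset.sum_congr rfl fun i _ => ?_
    rw [← Finset.sum_add_distrib]
    refine Finset.sum_congr rfl fun j _ => ?_
    rw [← mul_add, ← real_inner_self_eq_norm_sq]
    congr 1
    have : ⟪x j - x i, x j⟫_ℝ = -⟪x i - x j, x j⟫_ℝ := by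
      rw [← inner_neg_left]; congr 1; abel
    rw [this, ← sub_eq_add_neg, ← inner_sub_right]
  linarith [h2]
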